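/- Let n be odd, 2k+1 = gcd(n, t), and a_0, ..., a_{2k} as in the standard construction. In DP(n, t), the paths P_i : u_{a_i+t} x_{a_i+t} x_{a_i+t+1} ... x_{a_{i+2}+t−1} u_{a_{i+2}+t−1} for i ∈ ℤ_{2k+1} together contain every vertex x_m, m ∈ ℤ_n, exactly once. -/

import Mathlib

inductive DPVert (n : ℕ) : Type
  | x : ZMod n → DPVert n
  | u : ZMod n → DPVert n
  | v : ZMod n → DPVert n
  | y : ZMod n → DPVert n
  deriving DecidableEq

def DP (n t : ℕ) : SimpleGraph (DPVert n) :=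
  SimpleGraph.fromRel (fun a b =>
    (∃ i, a = DPVert.x i ∧ b = DPVert.x (i + 1)) ∨
    (∃ i, a = DPVert.y i ∧ b = DPVert.y (i + 1)) ∨
    (∃ i, a = DPVert.x i ∧ b = DPVert.u i) ∨
    (∃ i, a = DPVert.y i ∧ b = DPVert.v i) ∨
    (∃ i, a = DPVert.u i ∧ b = DPVert.v (i + (t : ZMod n))) ∨
    (∃ i, a = DPVert.v i ∧ b = DPVert.u (i + (t : ZMod n))))

/-- `a 0, a 1, …, a (2k)` is a "standard construction" sequence:
each `a i` lies in `{0, …, n-1}`, is congruent to `i` mod `2k+1`, and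
`a 0 < a 2 < ⋯ < a (2k) < a 1 < a 3 < ⋯ < a (2k-1)`. -/
def GoodSeq (n k : ℕ) (a : ℕ → ℕ) : Prop :=
  (∀ i ≤ 2 * k, a i < n ∧ a i % (2 * k + 1) = i % (2 * k + 1)) ∧
  (∀ j, j < k → a (2 * j) < a (2 * j + 2)) ∧
  (0 < k → a (2 * k) < a 1) ∧
  (∀ j, j + 1 < k → a (2 * j + 1) < a (2 * j + 3))

/-- Length of the cyclic interval `[a i, a ((i+2) % (2k+1)))` in `ℤ/nℤ`. -/
def intervalLen (n k : ℕ) (a : ℕ → ℕ) (i : ℕ) : ℕ :=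
  (a ((i + 2) % (2 * k + 1)) + n - a i - 1) % n + 1
section AuxLemmas

/-- Two naturals congruent mod `n` lying in a common window of length `n` are equal. -/
private lemma window_eq {n p q c : ℕ} (h : p % n = q % n)
    (hp1 : c ≤ p) (hp2 : p < c + n) (hq1 : c ≤ q) (hq2 : q < c + n) : p = q := by
  have key : ∀ p q : ℕ, p ≤ q → p % n = q % n → c ≤ p → q < c + n → p = q := by
    intro p q hle h _ hq2'
    have hd : n ∣ q - p := (Nat.modEq_iff_dvd' hle).mp h
    rcases hd with ⟨e, he⟩
    rcases Nat.eq_zero_or_pos e with rfl | hepos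
    · omega
    · have : n * 1 ≤ n * e := Nat.mul_le_mul_left n hepos
      omega
  rcases le_total p q with hle | hle
  · exact key p q hle h hp1 hq2
  · exact (key q p hle h.symm hq1 hp2).symm

/-- The sorted sequence: `sSeq j = a (2j mod (2k+1))` for `j ≤ 2k`, and `a 0 + n` at `j = 2k+1`. -/
def sSeq (n k : ℕ) (a : ℕ → ℕ) (j : ℕ) : ℕ :=
  if j = 2 * k + 1 then a 0 + n else a ((2 * j) % (2 * k + 1))

lemma sSeq_zero (n k : ℕ) (a : ℕ → ℕ) : sSeq n k a 0 = a 0 := by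
  simp [sSeq]

lemma sSeq_last (n k : ℕ) (a : ℕ → ℕ) : sSeq n k a (2 * k + 1) = a 0 + n := by
  simp [sSeq]

lemma sSeq_lt_n {n k : ℕ} {a : ℕ → ℕ} (ha : GoodSeq n k a) {j : ℕ} (hj : j ≤ 2 * k) :
    sSeq n k a j < n := by
  have hidx : (2 * j) % (2 * k + 1) ≤ 2 * k := by
    have := Nat.mod_lt (2 * j) (show 0 < 2 * k + 1 by omega); omega
  have := (ha.1 _ hidx).1
  rw [sSeq, if_neg (by omega)]
  exact this

lemma sSeq_succ_lt {n k : ℕ} {a : ℕ → ℕ} (ha : GoodSeq n k a) (hn : 0 < n) {j : ℕ}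
    (hj : j < 2 * k + 1) : sSeq n k a j < sSeq n k a (j + 1) := by
  obtain ⟨ha1, ha2, ha3, ha4⟩ := ha
  by_cases hj2 : j + 1 = 2 * k + 1
  · rw [sSeq, if_neg (by omega), sSeq, if_pos hj2]
    have hidx : (2 * j) % (2 * k + 1) ≤ 2 * k := by
      have := Nat.mod_lt (2 * j) (show 0 < 2 * k + 1 by omega); omega
    have := (ha1 _ hidx).1
    omega
  · rw [sSeq, if_neg (by omega), sSeq, if_neg hj2]
    rcases lt_trichotomy j k with h | h | h
    · rw [Nat.mod_eq_of_lt (by omega), Nat.mod_eq_of_lt (by omega)]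
      have := ha2 j h
      have he : 2 * (j + 1) = 2 * j + 2 := by ring
      rw [he]
      exact this
    · have hk : 0 < k := by omega
      have e1 : (2 * j) % (2 * k + 1) = 2 * k := by
        rw [h, Nat.mod_eq_of_lt (by omega)]
      have e2 : (2 * (j + 1)) % (2 * k + 1) = 1 := by
        rw [h, Nat.mod_eq_sub_mod (by omega), Nat.mod_eq_of_lt (by omega)]; omega
      rw [e1, e2]
      exact ha3 hk
    · have e1 : (2 * j) % (2 * k + 1) = 2 * (j - k - 1) + 1 := by
        rw [Nat.mod_eq_sub_mod (by omega), Nat.mod_eq_of_lt (by omega)]; omega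
      have e2 : (2 * (j + 1)) % (2 * k + 1) = 2 * (j - k - 1) + 3 := by
        rw [Nat.mod_eq_sub_mod (by omega), Nat.mod_eq_of_lt (by omega)]; omega
      rw [e1, e2]
      exact ha4 (j - k - 1) (by omega)

lemma sSeq_strict {n k : ℕ} {a : ℕ → ℕ} (ha : GoodSeq n k a) (hn : 0 < n) :
    ∀ j2, j2 ≤ 2 * k + 1 → ∀ j1 < j2, sSeq n k a j1 < sSeq n k a j2 := by
  intro j2
  induction j2 with
  | zero => omega
  | succ j2 ih =>
    intro hj2 j1 hj1
    rcases Nat.lt_succ_iff_lt_or_eq.mp hj1 with h | h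
    · exact lt_trans (ih (by omega) j1 h) (sSeq_succ_lt ha hn (by omega))
    · subst h; exact sSeq_succ_lt ha hn (by omega)

lemma sSeq_mono {n k : ℕ} {a : ℕ → ℕ} (ha : GoodSeq n k a) (hn : 0 < n) {j1 j2 : ℕ}
    (h : j1 ≤ j2) (hj2 : j2 ≤ 2 * k + 1) : sSeq n k a j1 ≤ sSeq n k a j2 := by
  rcases eq_or_lt_of_le h with rfl | h
  · exact le_refl _
  · exact le_of_lt (sSeq_strict ha hn j2 hj2 j1 h)

lemma sSeq_mod {n k : ℕ} {a : ℕ → ℕ} (ha : GoodSeq n k a) (hmn : 2 * k + 1 ∣ n)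
    {j : ℕ} (hj : j ≤ 2 * k + 1) : sSeq n k a j % (2 * k + 1) = (2 * j) % (2 * k + 1) := by
  by_cases hj2 : j = 2 * k + 1
  · subst hj2
    rw [sSeq_last]
    obtain ⟨q, hq⟩ := hmn
    have h0 : a 0 % (2 * k + 1) = 0 := by
      have := (ha.1 0 (by omega)).2
      simpa using this
    have h1 : (a 0 + n) % (2 * k + 1) = 0 := by
      rw [hq, Nat.add_mul_mod_self_left]
      exact h0
    have h2 : (2 * (2 * k + 1)) % (2 * k + 1) = 0 := Nat.mul_mod_left 2 _
    rw [h1, h2]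
  · rw [sSeq, if_neg hj2]
    have hidx : (2 * j) % (2 * k + 1) ≤ 2 * k := by
      have := Nat.mod_lt (2 * j) (show 0 < 2 * k + 1 by omega); omega
    have := (ha.1 _ hidx).2
    rw [this, Nat.mod_mod_of_dvd _ dvd_rfl]

end AuxLemmas
section AuxLemmas2

lemma lenS {n k : ℕ} {a : ℕ → ℕ} (ha : GoodSeq n k a) (hn : 0 < n) {j : ℕ} (hj : j ≤ 2 * k) :
    intervalLen n k a ((2 * j) % (2 * k + 1)) = sSeq n k a (j + 1) - sSeq n k a j := by
  have hstep : ((2 * j) % (2 * k + 1) + 2) % (2 * k + 1) = (2 * (j + 1)) % (2 * k + 1) := by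
    have h22 : 2 * j + 2 = 2 * (j + 1) := by ring
    rw [Nat.mod_add_mod, h22]
  have hsj : a ((2 * j) % (2 * k + 1)) = sSeq n k a j := by rw [sSeq, if_neg (by omega)]
  have hjn : sSeq n k a j < n := sSeq_lt_n ha hj
  rw [intervalLen, hstep, hsj]
  by_cases hj2 : j = 2 * k
  · have e0 : (2 * (j + 1)) % (2 * k + 1) = 0 := by
      rw [hj2]
      exact Nat.mul_mod_left 2 _
    have ha0 : a 0 ≤ sSeq n k a j := by
      rcases Nat.eq_zero_or_pos j with rfl | hjpos
      · rw [sSeq_zero]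
      · rw [← sSeq_zero n k a]
        exact sSeq_mono ha hn (Nat.zero_le j) (by omega)
    have hlast : sSeq n k a (j + 1) = a 0 + n := by rw [hj2, sSeq_last]
    rw [e0, hlast]
    rw [Nat.mod_eq_of_lt (by omega)]
    omega
  · have hsj1 : a ((2 * (j + 1)) % (2 * k + 1)) = sSeq n k a (j + 1) := by
      rw [sSeq, if_neg (by omega)]
    have hlt : sSeq n k a j < sSeq n k a (j + 1) := sSeq_succ_lt ha hn (by omega)
    have hj1n : sSeq n k a (j + 1) < n := sSeq_lt_n ha (by omega)
    rw [hsj1]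
    have he : sSeq n k a (j + 1) + n - sSeq n k a j - 1
        = n + (sSeq n k a (j + 1) - sSeq n k a j - 1) := by omega
    rw [he, Nat.add_mod_left, Nat.mod_eq_of_lt (by omega)]
    omega

lemma two_J {k : ℕ} {i : ℕ} (hi : i < 2 * k + 1) :
    2 * ((i * (k + 1)) % (2 * k + 1)) % (2 * k + 1) = i := by
  have h1 : (2 * ((i * (k + 1)) % (2 * k + 1))) % (2 * k + 1)
      = (2 * (i * (k + 1))) % (2 * k + 1) := (Nat.mod_modEq _ _).mul_left 2
  rw [h1]
  have h2 : 2 * (i * (k + 1)) = i + i * (2 * k + 1) := by ring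
  rw [h2, Nat.add_mul_mod_self_right, Nat.mod_eq_of_lt hi]

lemma J_le {k i : ℕ} : (i * (k + 1)) % (2 * k + 1) ≤ 2 * k := by
  have := Nat.mod_lt (i * (k + 1)) (show 0 < 2 * k + 1 by omega)
  omega

lemma gap_ge_two {n k : ℕ} {a : ℕ → ℕ} (ha : GoodSeq n k a) (hn : 3 ≤ n)
    (hmn : 2 * k + 1 ∣ n) {j : ℕ} (hj : j ≤ 2 * k) :
    sSeq n k a j + 2 ≤ sSeq n k a (j + 1) := by
  rcases Nat.eq_zero_or_pos k with rfl | hk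
  · have hj0 : j = 0 := by omega
    subst hj0
    rw [sSeq_zero]
    have : sSeq n 0 a 1 = a 0 + n := sSeq_last n 0 a
    rw [this]
    omega
  · have hlt : sSeq n k a j < sSeq n k a (j + 1) := sSeq_succ_lt ha (by omega) (by omega)
    by_contra hcon
    have heq : sSeq n k a (j + 1) = sSeq n k a j + 1 := by omega
    have m1 : sSeq n k a j % (2 * k + 1) = (2 * j) % (2 * k + 1) := sSeq_mod ha hmn (by omega)
    have m2 : sSeq n k a (j + 1) % (2 * k + 1) = (2 * (j + 1)) % (2 * k + 1) :=
      sSeq_mod ha hmn (by omega)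
    rw [heq] at m2
    have m3 : (sSeq n k a j + 1) % (2 * k + 1) = (2 * j + 1) % (2 * k + 1) :=
      Nat.ModEq.add_right 1 m1
    have m4 : (2 * j + 1) % (2 * k + 1) = (2 * (j + 1)) % (2 * k + 1) := by
      rw [← m3, m2]
    have hdvd : (2 * k + 1) ∣ (2 * (j + 1) - (2 * j + 1)) :=
      (Nat.modEq_iff_dvd' (by omega)).mp m4
    have : 2 * (j + 1) - (2 * j + 1) = 1 := by omega
    rw [this] at hdvd
    have := Nat.le_of_dvd (by omega) hdvd
    omega

lemma gap_le_n {n k : ℕ} {a : ℕ → ℕ} (ha : GoodSeq n k a) (hn : 0 < n) {j : ℕ}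
    (hj : j ≤ 2 * k) : sSeq n k a (j + 1) ≤ sSeq n k a j + n := by
  have h1 : sSeq n k a (j + 1) ≤ sSeq n k a (2 * k + 1) :=
    sSeq_mono ha hn (by omega) (le_refl _)
  have h2 : sSeq n k a 0 ≤ sSeq n k a j := sSeq_mono ha hn (Nat.zero_le _) (by omega)
  rw [sSeq_last] at h1
  rw [sSeq_zero] at h2
  omega

lemma len_eq' {n k : ℕ} {a : ℕ → ℕ} (ha : GoodSeq n k a) (hn : 0 < n) {i : ℕ}
    (hi : i < 2 * k + 1) :
    intervalLen n k a i
      = sSeq n k a ((i * (k + 1)) % (2 * k + 1) + 1) - sSeq n k a ((i * (k + 1)) % (2 * k + 1)) := by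
  conv_lhs => rw [← two_J hi]
  exact lenS ha hn J_le

lemma len_bounds {n k : ℕ} {a : ℕ → ℕ} (ha : GoodSeq n k a) (hn : 3 ≤ n)
    (hmn : 2 * k + 1 ∣ n) {i : ℕ} (hi : i < 2 * k + 1) :
    2 ≤ intervalLen n k a i ∧ intervalLen n k a i ≤ n := by
  rw [len_eq' ha (by omega) hi]
  have h1 := gap_ge_two ha hn hmn (J_le (k := k) (i := i))
  have h2 := gap_le_n ha (show 0 < n by omega) (J_le (k := k) (i := i))
  omega

end AuxLemmas2
section AuxLemmas3

lemma mem_iff {n k : ℕ} {a : ℕ → ℕ} (ha : GoodSeq n k a) (hn : 3 ≤ n)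
    {c : ZMod n} {j : ℕ} (hj : j ≤ 2 * k) {r' : ℕ}
    (hr'm : r' % n = c.val) (hr'1 : a 0 ≤ r') (hr'2 : r' < a 0 + n) :
    (c - ((a ((2 * j) % (2 * k + 1)) : ℕ) : ZMod n)).val < intervalLen n k a ((2 * j) % (2 * k + 1))
      ↔ sSeq n k a j ≤ r' ∧ r' < sSeq n k a (j + 1) := by
  haveI : NeZero n := ⟨by omega⟩
  have hsj : a ((2 * j) % (2 * k + 1)) = sSeq n k a j := by rw [sSeq, if_neg (by omega)]
  have hL : intervalLen n k a ((2 * j) % (2 * k + 1)) = sSeq n k a (j + 1) - sSeq n k a j :=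
    lenS ha (by omega) hj
  rw [hsj, hL]
  set d := (c - ((sSeq n k a j : ℕ) : ZMod n)).val with hd
  have hdn : d < n := ZMod.val_lt _
  have hcast : ((d : ℕ) : ZMod n) = c - ((sSeq n k a j : ℕ) : ZMod n) :=
    ZMod.natCast_rightInverse _
  have hc : c = ((sSeq n k a j + d : ℕ) : ZMod n) := by
    push_cast
    rw [hcast]
    ring
  have hr : c.val = (sSeq n k a j + d) % n := by rw [hc, ZMod.val_natCast]
  have hs0j : sSeq n k a 0 ≤ sSeq n k a j := sSeq_mono ha (by omega) (Nat.zero_le _) (by omega)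
  have hsj1 : sSeq n k a (j + 1) ≤ sSeq n k a (2 * k + 1) :=
    sSeq_mono ha (by omega) (by omega) (le_refl _)
  rw [sSeq_zero] at hs0j
  rw [sSeq_last] at hsj1
  have hlt : sSeq n k a j < sSeq n k a (j + 1) := sSeq_succ_lt ha (by omega) (by omega)
  constructor
  · intro h
    have hwin : sSeq n k a j + d = r' := by
      apply window_eq (c := a 0) (n := n)
      · rw [← hr'm] at hr; exact hr.symm
      · omega
      · omega
      · exact hr'1
      · exact hr'2
    omega
  · rintro ⟨h1, h2⟩
    have hmods : (sSeq n k a j + d) % n = (sSeq n k a j + (r' - sSeq n k a j)) % n := by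
      have : sSeq n k a j + (r' - sSeq n k a j) = r' := by omega
      rw [this, hr'm, hr]
    have hwin : sSeq n k a j + d = sSeq n k a j + (r' - sSeq n k a j) := by
      apply window_eq (c := sSeq n k a j) (n := n) hmods
      · omega
      · omega
      · omega
      · omega
    omega

lemma exists_j {n k : ℕ} {a : ℕ → ℕ} (ha : GoodSeq n k a) (hn : 0 < n) {r' : ℕ}
    (h1 : a 0 ≤ r') (h2 : r' < a 0 + n) :
    ∃ j ≤ 2 * k, sSeq n k a j ≤ r' ∧ r' < sSeq n k a (j + 1) := by
  have hP0 : sSeq n k a 0 ≤ r' := by simpa [sSeq_zero] using h1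
  set j0 := Nat.findGreatest (fun j => sSeq n k a j ≤ r') (2 * k) with hj0def
  have hj0le : j0 ≤ 2 * k := Nat.findGreatest_le (2 * k)
  have hj0P : sSeq n k a j0 ≤ r' := by
    rw [hj0def]
    exact Nat.findGreatest_spec (P := fun j => sSeq n k a j ≤ r') (Nat.zero_le _) hP0
  refine ⟨j0, hj0le, hj0P, ?_⟩
  rcases eq_or_lt_of_le hj0le with heq | hlt
  · have : sSeq n k a (j0 + 1) = a 0 + n := by rw [heq, sSeq_last]
    omega
  · have hnP : ¬ sSeq n k a (j0 + 1) ≤ r' :=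
      Nat.findGreatest_is_greatest (P := fun j => sSeq n k a j ≤ r') (n := 2 * k)
        (k := j0 + 1) (by omega) (by omega)
    omega

lemma unique_j {n k : ℕ} {a : ℕ → ℕ} (ha : GoodSeq n k a) (hn : 0 < n) {r' j1 j2 : ℕ}
    (hj1 : j1 ≤ 2 * k) (hj2 : j2 ≤ 2 * k)
    (h1 : sSeq n k a j1 ≤ r' ∧ r' < sSeq n k a (j1 + 1))
    (h2 : sSeq n k a j2 ≤ r' ∧ r' < sSeq n k a (j2 + 1)) : j1 = j2 := by
  by_contra hne
  have key : ∀ i1 i2 : ℕ, i1 ≤ 2 * k → i2 ≤ 2 * k → i1 < i2 →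
      sSeq n k a i1 ≤ r' → r' < sSeq n k a (i1 + 1) → sSeq n k a i2 ≤ r' → False := by
    intro i1 i2 hi1 hi2 hlt hl1 hu1 hl2
    have : sSeq n k a (i1 + 1) ≤ sSeq n k a i2 := sSeq_mono ha hn (by omega) (by omega)
    omega
  rcases Nat.lt_or_ge j1 j2 with h | h
  · exact key j1 j2 hj1 hj2 h h1.1 h1.2 h2.1
  · exact key j2 j1 hj2 hj1 (by omega) h2.1 h2.2 h1.1

lemma master {n k : ℕ} {a : ℕ → ℕ} (ha : GoodSeq n k a) (hn : 3 ≤ n)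
    (hmn : 2 * k + 1 ∣ n) (c : ZMod n) :
    ∃! i, i < 2 * k + 1 ∧ (c - ((a i : ℕ) : ZMod n)).val < intervalLen n k a i := by
  haveI : NeZero n := ⟨by omega⟩
  have hv : c.val < n := ZMod.val_lt c
  have ha0 : a 0 < n := (ha.1 0 (by omega)).1
  obtain ⟨r', hr'm, hr'1, hr'2⟩ :
      ∃ r', r' % n = c.val ∧ a 0 ≤ r' ∧ r' < a 0 + n := by
    by_cases h : c.val < a 0
    · exact ⟨c.val + n, by rw [Nat.add_mod_right, Nat.mod_eq_of_lt hv], by omega, by omega⟩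
    · exact ⟨c.val, by rw [Nat.mod_eq_of_lt hv], by omega, by omega⟩
  obtain ⟨j0, hj0, hlo, hhi⟩ := exists_j ha (by omega) hr'1 hr'2
  refine ⟨(2 * j0) % (2 * k + 1),
    ⟨Nat.mod_lt _ (by omega), (mem_iff ha hn hj0 hr'm hr'1 hr'2).mpr ⟨hlo, hhi⟩⟩, ?_⟩
  rintro i ⟨hi, hmem⟩
  set j1 := (i * (k + 1)) % (2 * k + 1) with hj1def
  have hj1 : j1 ≤ 2 * k := J_le
  have h2j1 : (2 * j1) % (2 * k + 1) = i := two_J hi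
  rw [← h2j1] at hmem
  have hmem' := (mem_iff ha hn hj1 hr'm hr'1 hr'2).mp hmem
  have : j1 = j0 := unique_j ha (by omega) hj1 hj0 hmem' ⟨hlo, hhi⟩
  rw [← h2j1, this]

lemma cast_len {n k : ℕ} {a : ℕ → ℕ} (ha : GoodSeq n k a) (hn : 3 ≤ n) {i : ℕ}
    (hi : i < 2 * k + 1) :
    ((intervalLen n k a i : ℕ) : ZMod n)
      = ((a ((i + 2) % (2 * k + 1)) : ℕ) : ZMod n) - ((a i : ℕ) : ZMod n) := by
  have hain : a i < n := (ha.1 i (by omega)).1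
  set X := a ((i + 2) % (2 * k + 1)) + n - a i - 1 with hX
  have hXeq : X + (a i + 1) = a ((i + 2) % (2 * k + 1)) + n := by omega
  have hcast : ((X : ℕ) : ZMod n) + ((a i : ℕ) : ZMod n) + 1
      = ((a ((i + 2) % (2 * k + 1)) : ℕ) : ZMod n) := by
    have := congrArg (fun m : ℕ => (m : ZMod n)) hXeq
    push_cast at this
    rw [ZMod.natCast_self] at this
    linear_combination this
  rw [intervalLen]
  push_cast [ZMod.natCast_mod]
  linear_combination hcast

end AuxLemmas3
section PathAux

lemma DP_adj_xx {n t : ℕ} (hn : 3 ≤ n) (i : ZMod n) :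
    (DP n t).Adj (DPVert.x i) (DPVert.x (i + 1)) := by
  haveI : Fact (1 < n) := ⟨by omega⟩
  rw [DP, SimpleGraph.fromRel_adj]
  refine ⟨fun h => ?_, Or.inl (Or.inl ⟨i, rfl, rfl⟩)⟩
  rw [DPVert.x.injEq] at h
  exact one_ne_zero (left_eq_add.mp h)

lemma DP_adj_xu {n t : ℕ} (i : ZMod n) :
    (DP n t).Adj (DPVert.x i) (DPVert.u i) := by
  rw [DP, SimpleGraph.fromRel_adj]
  exact ⟨fun h => (nomatch h), Or.inl (Or.inr (Or.inr (Or.inl ⟨i, rfl, rfl⟩)))⟩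

def xWalk (n t : ℕ) (hn : 3 ≤ n) :
    (l : ℕ) → (b : ZMod n) → (DP n t).Walk (DPVert.x b) (DPVert.x (b + (l : ZMod n)))
  | 0, b => SimpleGraph.Walk.nil.copy rfl (congrArg DPVert.x (by push_cast; ring))
  | (l + 1), b =>
      (SimpleGraph.Walk.cons (DP_adj_xx hn b) (xWalk n t hn l (b + 1))).copy rfl
        (congrArg DPVert.x (by push_cast; ring))

lemma xWalk_support (n t : ℕ) (hn : 3 ≤ n) :
    ∀ (l : ℕ) (b : ZMod n),
      (xWalk n t hn l b).support
        = (List.range (l + 1)).map (fun j : ℕ => DPVert.x (b + (j : ZMod n)))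
  | 0, b => by
    rw [xWalk, SimpleGraph.Walk.support_copy, SimpleGraph.Walk.support_nil]
    simp [List.range_succ]
  | (l + 1), b => by
    rw [xWalk, SimpleGraph.Walk.support_copy, SimpleGraph.Walk.support_cons,
      xWalk_support n t hn l (b + 1)]
    conv_rhs => rw [List.range_succ_eq_map, List.map_cons, List.map_map]
    congr 1
    · simp
    · refine List.map_congr_left fun j _ => ?_
      simp only [Function.comp_apply]
      congr 1
      push_cast
      ring

end PathAux
theorem P_paths_cover_x (n t k : ℕ) (hn : 3 ≤ n) (ht : 2 ≤ 2 * t) (htn : 2 * t < n)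
    (hodd : Odd n) (hgcd : Nat.gcd n t = 2 * k + 1) (a : ℕ → ℕ) (ha : GoodSeq n k a) :
    (∀ i < 2 * k + 1,
      ∃ w : (DP n t).Walk (DPVert.u ((a i : ZMod n) + (t : ZMod n)))
          (DPVert.u ((a ((i + 2) % (2 * k + 1)) : ZMod n) + (t : ZMod n) - 1)),
        w.IsPath ∧
        w.support =
          DPVert.u ((a i : ZMod n) + (t : ZMod n)) ::
            ((List.range (intervalLen n k a i)).map
              (fun j => DPVert.x ((a i : ZMod n) + (t : ZMod n) + (j : ZMod n))) ++
             [DPVert.u ((a ((i + 2) % (2 * k + 1)) : ZMod n) + (t : ZMod n) - 1)])) ∧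
    (Set.Iio (2 * k + 1)).Pairwise (fun i i' : ℕ =>
      Disjoint
        ((fun j : ℕ => DPVert.x ((a i : ZMod n) + (t : ZMod n) + (j : ZMod n))) ''
          Set.Iio (intervalLen n k a i))
        ((fun j : ℕ => DPVert.x ((a i' : ZMod n) + (t : ZMod n) + (j : ZMod n))) ''
          Set.Iio (intervalLen n k a i'))) ∧
    (⋃ i ∈ Set.Iio (2 * k + 1),
        (fun j : ℕ => DPVert.x ((a i : ZMod n) + (t : ZMod n) + (j : ZMod n))) ''
          Set.Iio (intervalLen n k a i))
      = {w : DPVert n | ∃ m, w = DPVert.x m} := by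
  haveI : NeZero n := ⟨by omega⟩
  have hmn : 2 * k + 1 ∣ n := by rw [← hgcd]; exact Nat.gcd_dvd_left n t
  refine ⟨?_, ?_, ?_⟩
  · -- Part 1: the paths
    intro i hi
    set L := intervalLen n k a i with hLdef
    obtain ⟨hL2, hLn⟩ := len_bounds ha hn hmn hi
    have hcast : ((L : ℕ) : ZMod n)
        = ((a ((i + 2) % (2 * k + 1)) : ℕ) : ZMod n) - ((a i : ℕ) : ZMod n) :=
      cast_len ha hn hi
    set b : ZMod n := ((a i : ℕ) : ZMod n) + ((t : ℕ) : ZMod n) with hbdef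
    set e : ZMod n := ((a ((i + 2) % (2 * k + 1)) : ℕ) : ZMod n) + ((t : ℕ) : ZMod n) - 1
      with hedef
    have hL1cast : ((L - 1 : ℕ) : ZMod n) = ((L : ℕ) : ZMod n) - 1 := by
      rw [Nat.cast_sub (by omega : 1 ≤ L), Nat.cast_one]
    have hend : b + ((L - 1 : ℕ) : ZMod n) = e := by
      rw [hL1cast, hcast, hbdef, hedef]; ring
    obtain ⟨w, hsup⟩ : ∃ w : (DP n t).Walk (DPVert.u b) (DPVert.u e),
        w.support = DPVert.u b ::
          ((List.range L).map (fun j : ℕ => DPVert.x (b + (j : ZMod n))) ++ [DPVert.u e]) := by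
      refine ⟨(SimpleGraph.Walk.cons (DP_adj_xu b).symm
        ((xWalk n t hn (L - 1) b).concat (DP_adj_xu _))).copy rfl (congrArg DPVert.u hend), ?_⟩
      rw [SimpleGraph.Walk.support_copy, SimpleGraph.Walk.support_cons,
        SimpleGraph.Walk.support_concat, xWalk_support, hend]
      have hL1 : L - 1 + 1 = L := by omega
      rw [hL1]
    refine ⟨w, ?_, ?_⟩
    swap
    · rw [hsup]
      simp only [bind_pure_comp, List.map_eq_map, List.map_map]
      rfl
    rw [SimpleGraph.Walk.isPath_def, hsup]
    have hinj : ∀ j1 ∈ List.range L, ∀ j2 ∈ List.range L,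
        ((j1 : ℕ) : ZMod n) = ((j2 : ℕ) : ZMod n) → j1 = j2 := by
      intro j1 h1 j2 h2 h
      rw [List.mem_range] at h1 h2
      have hval := congrArg ZMod.val h
      rw [ZMod.val_natCast, ZMod.val_natCast,
        Nat.mod_eq_of_lt (by omega), Nat.mod_eq_of_lt (by omega)] at hval
      exact hval
    have hbe : b ≠ e := by
      rw [← hend]
      intro h
      have h0 : ((L - 1 : ℕ) : ZMod n) = 0 := left_eq_add.mp h
      have hval := congrArg ZMod.val h0
      rw [ZMod.val_natCast, Nat.mod_eq_of_lt (by omega), ZMod.val_zero] at hval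
      omega
    rw [List.nodup_cons, List.nodup_append]
    refine ⟨?_, ?_, List.nodup_singleton _, ?_⟩
    · intro hmem
      rw [List.mem_append] at hmem
      rcases hmem with hmem | hmem
      · obtain ⟨j, hj, hjx⟩ := List.mem_map.mp hmem
        exact nomatch hjx
      · rw [List.mem_singleton, DPVert.u.injEq] at hmem
        exact hbe hmem
    · refine List.Nodup.map_on ?_ List.nodup_range
      intro j1 h1 j2 h2 h
      rw [DPVert.x.injEq] at h
      exact hinj j1 h1 j2 h2 (add_left_cancel h)
    · intro z hz z' hz' hzz
      rw [List.mem_singleton] at hz'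
      subst hz'
      obtain ⟨j, hj, hjx⟩ := List.mem_map.mp hz
      exact nomatch hjx.trans hzz
  · -- Part 2: disjointness
    intro i hi i' hi' hne
    rw [Set.mem_Iio] at hi hi'
    rw [Set.disjoint_left]
    rintro v ⟨j, hj, rfl⟩ ⟨j', hj', hv⟩
    rw [Set.mem_Iio] at hj hj'
    simp only [DPVert.x.injEq] at hv
    have hLn := (len_bounds ha hn hmn hi).2
    have hLn' := (len_bounds ha hn hmn hi').2
    set c : ZMod n := ((a i : ℕ) : ZMod n) + ((j : ℕ) : ZMod n) with hcdef
    have hmem1 : (c - ((a i : ℕ) : ZMod n)).val < intervalLen n k a i := by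
      have hcc : c - ((a i : ℕ) : ZMod n) = ((j : ℕ) : ZMod n) := by rw [hcdef]; ring
      rw [hcc, ZMod.val_natCast, Nat.mod_eq_of_lt (by omega)]
      exact hj
    have hmem2 : (c - ((a i' : ℕ) : ZMod n)).val < intervalLen n k a i' := by
      have hcc : c - ((a i' : ℕ) : ZMod n) = ((j' : ℕ) : ZMod n) := by
        rw [hcdef]
        linear_combination -hv
      rw [hcc, ZMod.val_natCast, Nat.mod_eq_of_lt (by omega)]
      exact hj'
    obtain ⟨i0, -, huniq⟩ := master ha hn hmn c
    exact hne ((huniq i ⟨hi, hmem1⟩).trans (huniq i' ⟨hi', hmem2⟩).symm)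
  · -- Part 3: covering
    ext w
    simp only [Set.mem_iUnion, Set.mem_image, Set.mem_Iio, Set.mem_setOf_eq]
    constructor
    · rintro ⟨i, hi, j, hj, rfl⟩
      exact ⟨_, rfl⟩
    · rintro ⟨mv, rfl⟩
      obtain ⟨i, ⟨hi, hmem⟩, -⟩ := master ha hn hmn (mv - ((t : ℕ) : ZMod n))
      refine ⟨i, hi, (mv - ((t : ℕ) : ZMod n) - ((a i : ℕ) : ZMod n)).val, hmem, ?_⟩
      congr 1
      have hval : (((mv - ((t : ℕ) : ZMod n) - ((a i : ℕ) : ZMod n)).val : ℕ) : ZMod n)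
          = mv - ((t : ℕ) : ZMod n) - ((a i : ℕ) : ZMod n) := ZMod.natCast_rightInverse _
      rw [hval]
      ring
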